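/- Let n, m, p, d be positive integers. Let A (n×n), B (n×m), C (p×n), D (n×d) be real matrices; let W (d×d), V (p×p), Γ_w (m×m) be symmetric positive definite matrices, Ē a symmetric n×n matrix, X̂ and Ŷ symmetric n×n matrices, Q̂ an n×n matrix, F̂ an n×p matrix, and Û an invertible n×n matrix. Assume: (i) the symmetric 7×7 block matrix with upper-triangular blocks given by row 1: [X̂, I, A·X̂, A, D, B, 0], row 2: [Ŷ, Q̂, Ŷ·A + F̂·C, Ŷ·D, Ŷ·B, F̂], row 3: [X̂, I, 0, 0, 0], row 4: [Ŷ, 0, 0, 0], row 5: [W⁻¹, 0, 0], row 6: [Γ_w, 0], row 7: [V⁻¹] is positive definite; and (ii) the block matrix [[Ē, X̂ − Û, I], [(X̂ − Û)ᵀ, X̂, I], [I, I, Ŷ]] is positive definite. Then Ŝ := (I − Ŷ·X̂)·Û⁻¹ is invertible, and defining Â = Ŝ⁻¹·(Q̂ − Ŷ·A·X̂ − F̂·C·X̂)·Û⁻¹, B̂ = Ŝ⁻¹·F̂, and the augmented matrices 𝐀̂ = [[A, 0], [B̂·C, Â]] (2n×2n), 𝐁̂ = [[D, B, 0], [0, 0,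 B̂]] (2n×(d+m+p)), 𝐂̂ = [I, −I] (n×2n), 𝐖 = blockdiag(W, Γ_w⁻¹, V), there exists a symmetric positive definite 2n×2n matrix 𝐗̂ such that 𝐗̂ − 𝐀̂𝐗̂𝐀̂ᵀ − 𝐁̂𝐖𝐁̂ᵀ is positive definite and Ē − 𝐂̂𝐗̂𝐂̂ᵀ is positive definite. -/

import Mathlib

open Matrix

variable {k l : Type*} [Fintype k] [Fintype l] [DecidableEq k] [DecidableEq l]


lemma myPosDef_conj {M Q : Matrix k k ℝ} (hM : M.PosDef) (hQ : IsUnit Q) :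
    (Q * M * Qᵀ).PosDef := by
  have hQd : IsUnit Q.det := (Matrix.isUnit_iff_isUnit_det Q).mp hQ
  have hQtd : IsUnit Qᵀ.det := by rwa [Matrix.det_transpose]
  have hMt : Mᵀ = M := by
    have := hM.1
    rwa [Matrix.IsHermitian, conjTranspose_eq_transpose_of_trivial] at this
  rw [posDef_iff_dotProduct_mulVec]
  constructor
  · rw [Matrix.IsHermitian, conjTranspose_eq_transpose_of_trivial]
    simp [Matrix.transpose_mul, hMt, Matrix.mul_assoc]
  · intro x hx
    have hy : Qᵀ *ᵥ x ≠ 0 := by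
      intro h
      apply hx
      have := congrArg (fun v => (Qᵀ)⁻¹ *ᵥ v) h
      simpa [Matrix.mulVec_mulVec, Matrix.nonsing_inv_mul _ hQtd] using this
    have := hM.dotProduct_mulVec_pos hy
    simp only [star_trivial] at this ⊢
    rwa [← Matrix.mulVec_mulVec, ← Matrix.mulVec_mulVec, Matrix.dotProduct_mulVec,
      ← Matrix.mulVec_transpose]

lemma myPosDef_fromBlocks₁₁ {A : Matrix k k ℝ} {B : Matrix k l ℝ} {C : Matrix l k ℝ}
    {D : Matrix l l ℝ} (h : (fromBlocks A B C D).PosDef) : A.PosDef := by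
  rw [posDef_iff_dotProduct_mulVec]
  constructor
  · have h1 := h.1
    rw [Matrix.IsHermitian, fromBlocks_conjTranspose] at h1
    have := congrArg Matrix.toBlocks₁₁ h1
    simpa [Matrix.toBlocks_fromBlocks₁₁, Matrix.IsSymm] using this
  · intro x hx
    have hxe : (Sum.elim x (0 : l → ℝ)) ≠ 0 := by
      intro hc; apply hx; funext i; exact congrFun hc (Sum.inl i)
    have := h.dotProduct_mulVec_pos hxe
    simpa [Matrix.fromBlocks_mulVec, Function.star_sumElim] using this

lemma myPosDef_fromBlocks₂₂ {A : Matrix k k ℝ} {B : Matrix k l ℝ} {C : Matrix l k ℝ}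
    {D : Matrix l l ℝ} (h : (fromBlocks A B C D).PosDef) : D.PosDef := by
  rw [posDef_iff_dotProduct_mulVec]
  constructor
  · have h1 := h.1
    rw [Matrix.IsHermitian, fromBlocks_conjTranspose] at h1
    have := congrArg Matrix.toBlocks₂₂ h1
    simpa [Matrix.toBlocks_fromBlocks₂₂, Matrix.IsSymm] using this
  · intro x hx
    have hxe : (Sum.elim (0 : k → ℝ) x) ≠ 0 := by
      intro hc; apply hx; funext i; exact congrFun hc (Sum.inr i)
    have := h.dotProduct_mulVec_pos hxe
    simpa [Matrix.fromBlocks_mulVec, Function.star_sumElim] using this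

lemma myPosDef_blockDiag {A : Matrix k k ℝ} {D : Matrix l l ℝ}
    (hA : A.PosDef) (hD : D.PosDef) : (fromBlocks A 0 0 D).PosDef := by
  rw [posDef_iff_dotProduct_mulVec]
  constructor
  · rw [Matrix.IsHermitian, fromBlocks_conjTranspose, hA.1.eq, hD.1.eq]
    simp
  · intro x hx
    have hor : x ∘ Sum.inl ≠ 0 ∨ x ∘ Sum.inr ≠ 0 := by
      by_contra hc
      push_neg at hc
      apply hx
      rw [← Sum.elim_comp_inl_inr x, hc.1, hc.2]
      simp
    have key : star x ⬝ᵥ (fromBlocks A 0 0 D *ᵥ x) =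
        star (x ∘ Sum.inl) ⬝ᵥ (A *ᵥ (x ∘ Sum.inl)) + star (x ∘ Sum.inr) ⬝ᵥ (D *ᵥ (x ∘ Sum.inr)) := by
      conv_lhs => rw [← Sum.elim_comp_inl_inr x]
      simp only [Matrix.fromBlocks_mulVec, Function.star_sumElim, star_trivial,
        Matrix.zero_mulVec, add_zero, zero_add, Sum.elim_comp_inl_inr]
      rw [Matrix.dotProduct_block]
      simp
    rw [key]
    rcases hor with h1 | h1
    · exact add_pos_of_pos_of_nonneg (hA.dotProduct_mulVec_pos h1) (hD.posSemidef.dotProduct_mulVec_nonneg _)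
    · exact add_pos_of_nonneg_of_pos (hA.posSemidef.dotProduct_mulVec_nonneg _) (hD.dotProduct_mulVec_pos h1)

lemma myPosDef_schur₂₂ {A : Matrix k k ℝ} (B : Matrix k l ℝ) {D : Matrix l l ℝ}
    (hD : D.PosDef) (h : (fromBlocks A B Bᵀ D).PosDef) : (A - B * D⁻¹ * Bᵀ).PosDef := by
  have hBt : (Bᵀ : Matrix l k ℝ) = Bᴴ := (conjTranspose_eq_transpose_of_trivial B).symm
  rw [hBt] at h ⊢
  cases hD.isUnit.nonempty_invertible
  rw [posDef_iff_dotProduct_mulVec]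
  constructor
  · exact (Matrix.IsHermitian.fromBlocks₂₂ A B hD.1).mp h.1
  · intro x hx
    have hne : (Sum.elim x (-((D⁻¹ * Bᴴ) *ᵥ x))) ≠ 0 := by
      intro hc; apply hx; funext i; exact congrFun hc (Sum.inl i)
    have hpos := h.dotProduct_mulVec_pos hne
    rw [Matrix.dotProduct_mulVec,
      Matrix.schur_complement_eq₂₂ A B x (-((D⁻¹ * Bᴴ) *ᵥ x)) hD.1] at hpos
    simpa [Matrix.dotProduct_mulVec] using hpos

set_option maxHeartbeats 1000000 in
/-- Estimator-synthesis content of Theorem 2, where the adversary measures the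
system output directly, so only the process noise covariance `W`, the input
privacy noise covariance `Γ_w⁻¹`, and the measurement noise covariance `V`
enter the adversary's estimator; the estimation-error covariance `𝐂̂𝐗̂𝐂̂ᵀ` is
bounded by `Ē`. -/
theorem theorem2_estimator_synthesis
    (n m p d : ℕ) (hn : 0 < n) (hm : 0 < m) (hp : 0 < p) (hd : 0 < d)
    (A : Matrix (Fin n) (Fin n) ℝ) (B : Matrix (Fin n) (Fin m) ℝ)
    (C : Matrix (Fin p) (Fin n) ℝ) (D : Matrix (Fin n) (Fin d) ℝ)
    (W : Matrix (Fin d) (Fin d) ℝ) (V : Matrix (Fin p) (Fin p) ℝ)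
    (Gw : Matrix (Fin m) (Fin m) ℝ)
    (hW : W.PosDef) (hV : V.PosDef) (hGw : Gw.PosDef)
    (Ebar : Matrix (Fin n) (Fin n) ℝ) (hEbar : Ebar.IsHermitian)
    (Xhat Yhat : Matrix (Fin n) (Fin n) ℝ)
    (hXhatsymm : Xhat.IsHermitian) (hYhatsymm : Yhat.IsHermitian)
    (Qhat : Matrix (Fin n) (Fin n) ℝ) (Fhat : Matrix (Fin n) (Fin p) ℝ)
    (Uhat : Matrix (Fin n) (Fin n) ℝ) (hUhatUnit : IsUnit Uhat)
    -- the 7×7 block LMI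
    (hLMI1 :
      (fromBlocks
        (fromBlocks
          (fromBlocks Xhat 1 1 Yhat)
          (fromBlocks (A * Xhat) A Qhat (Yhat * A + Fhat * C))
          (fromBlocks (A * Xhat) A Qhat (Yhat * A + Fhat * C))ᵀ
          (fromBlocks Xhat 1 1 Yhat))
        (fromBlocks (fromBlocks D B (Yhat * D) (Yhat * B)) (fromRows 0 Fhat) 0 0)
        (fromBlocks (fromBlocks D B (Yhat * D) (Yhat * B)) (fromRows 0 Fhat) 0 0)ᵀ
        (fromBlocks (fromBlocks W⁻¹ 0 0 Gw) 0 0 V⁻¹)).PosDef)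
    -- the error-covariance LMI
    (hLMI2 :
      (fromBlocks Ebar (fromCols (Xhat - Uhat) 1)
        (fromRows (Xhat - Uhat)ᵀ 1) (fromBlocks Xhat 1 1 Yhat)).PosDef)
    -- estimator reconstruction
    (Shat : Matrix (Fin n) (Fin n) ℝ) (hShat : Shat = (1 - Yhat * Xhat) * Uhat⁻¹)
    (Ahat : Matrix (Fin n) (Fin n) ℝ)
    (hAhat : Ahat = Shat⁻¹ * (Qhat - Yhat * A * Xhat - Fhat * C * Xhat) * Uhat⁻¹)
    (Bhat : Matrix (Fin n) (Fin p) ℝ) (hBhat : Bhat = Shat⁻¹ * Fhat) :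
    IsUnit Shat ∧
    ∃ Xb : Matrix (Fin n ⊕ Fin n) (Fin n ⊕ Fin n) ℝ,
      Xb.PosDef ∧
      (Xb - (fromBlocks A 0 (Bhat * C) Ahat) * Xb * (fromBlocks A 0 (Bhat * C) Ahat)ᵀ
        - (fromBlocks (fromCols D B) 0 0 Bhat :
            Matrix (Fin n ⊕ Fin n) ((Fin d ⊕ Fin m) ⊕ Fin p) ℝ)
          * (fromBlocks (fromBlocks W 0 0 Gw⁻¹) 0 0 V)
          * (fromBlocks (fromCols D B) 0 0 Bhat :
            Matrix (Fin n ⊕ Fin n) ((Fin d ⊕ Fin m) ⊕ Fin p) ℝ)ᵀ).PosDef ∧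
      (Ebar - (fromCols 1 (-1) : Matrix (Fin n) (Fin n ⊕ Fin n) ℝ) * Xb
        * (fromCols 1 (-1) : Matrix (Fin n) (Fin n ⊕ Fin n) ℝ)ᵀ).PosDef := by
  -- determinant units
  have dU : IsUnit Uhat.det := (Matrix.isUnit_iff_isUnit_det _).mp hUhatUnit
  have dUi : IsUnit (Uhat⁻¹).det := Uhat.isUnit_nonsing_inv_det dU
  -- symmetry facts
  have hXt : Xhatᵀ = Xhat := by
    rw [← conjTranspose_eq_transpose_of_trivial]; exact hXhatsymm
  have hYt : Yhatᵀ = Yhat := by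
    rw [← conjTranspose_eq_transpose_of_trivial]; exact hYhatsymm
  -- extract components of the big LMI
  have hM11 := myPosDef_fromBlocks₁₁ hLMI1
  have hPb := myPosDef_fromBlocks₁₁ hM11
  have hXhat := myPosDef_fromBlocks₁₁ hPb
  have hYhat := myPosDef_fromBlocks₂₂ hPb
  have dY : IsUnit Yhat.det := (Matrix.isUnit_iff_isUnit_det _).mp hYhat.isUnit
  have dPb : IsUnit (fromBlocks Xhat 1 1 Yhat).det :=
    (Matrix.isUnit_iff_isUnit_det _).mp hPb.isUnit
  -- Schur complement on Pb
  have hPb' : (fromBlocks Xhat (1 : Matrix (Fin n) (Fin n) ℝ)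
      (1 : Matrix (Fin n) (Fin n) ℝ)ᵀ Yhat).PosDef := by rwa [Matrix.transpose_one]
  have hXY : (Xhat - Yhat⁻¹).PosDef := by
    have := myPosDef_schur₂₂ (1 : Matrix (Fin n) (Fin n) ℝ) hYhat hPb'
    simpa using this
  -- invertibility of Shat
  have hIYX : (1 - Yhat * Xhat) = -(Yhat * (Xhat - Yhat⁻¹)) := by
    rw [Matrix.mul_sub, Matrix.mul_nonsing_inv _ dY, neg_sub]
  have hSu : IsUnit Shat := by
    rw [hShat, hIYX]
    exact ((hYhat.isUnit.mul hXY.isUnit).neg).mul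
      (Matrix.isUnit_nonsing_inv_iff.mpr hUhatUnit)
  have dS : IsUnit Shat.det := (Matrix.isUnit_iff_isUnit_det _).mp hSu
  refine ⟨hSu, ?_⟩
  -- structural matrices
  set P1 : Matrix (Fin n ⊕ Fin n) (Fin n ⊕ Fin n) ℝ := fromBlocks 1 Yhat 0 Shatᵀ with hP1def
  set P2m : Matrix (Fin n ⊕ Fin n) (Fin n ⊕ Fin n) ℝ := fromBlocks Xhat 1 Uhat 0 with hP2mdef
  set Pb : Matrix (Fin n ⊕ Fin n) (Fin n ⊕ Fin n) ℝ := fromBlocks Xhat 1 1 Yhat with hPbdef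
  have hP1t : P1ᵀ = fromBlocks 1 0 Yhat Shat := by
    rw [hP1def, fromBlocks_transpose, transpose_one, transpose_zero, transpose_transpose, hYt]
  have dP1 : IsUnit P1.det := by
    rw [hP1def, Matrix.det_fromBlocks_zero₂₁, Matrix.det_one, one_mul, Matrix.det_transpose]
    exact dS
  have dP1t : IsUnit (P1ᵀ).det := by rwa [Matrix.det_transpose]
  -- key product identity  P1ᵀ * P2m = Pb
  have hSU : Shat * Uhat = 1 - Yhat * Xhat := by
    rw [hShat, Matrix.nonsing_inv_mul_cancel_right _ _ dU]
  have hPbeq : P1ᵀ * P2m = Pb := by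
    rw [hP1t, hP2mdef, hPbdef, fromBlocks_multiply]
    have key : Yhat * Xhat + (1 - Yhat * Xhat) = 1 := by abel
    simp only [Matrix.one_mul, Matrix.mul_one, Matrix.zero_mul, Matrix.mul_zero,
      add_zero, zero_add, hSU, key]
  have hPbt : Pbᵀ = Pb := by
    rw [hPbdef, fromBlocks_transpose, transpose_one, hXt, hYt]
  -- the Lyapunov variable
  set Xb : Matrix (Fin n ⊕ Fin n) (Fin n ⊕ Fin n) ℝ := P2m * P1⁻¹ with hXbdef
  have hXbP1 : Xb * P1 = P2m := by
    rw [hXbdef, Matrix.nonsing_inv_mul_cancel_right _ _ dP1]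
  have hXbalt : Xb = (P1ᵀ)⁻¹ * Pb * ((P1ᵀ)⁻¹)ᵀ := by
    rw [Matrix.transpose_nonsing_inv, transpose_transpose, ← hPbeq,
      Matrix.nonsing_inv_mul_cancel_left _ _ dP1t, hXbdef]
  have hXbPD : Xb.PosDef := by
    rw [hXbalt]
    exact myPosDef_conj hPb (Matrix.isUnit_nonsing_inv_iff.mpr
      ((Matrix.isUnit_iff_isUnit_det _).mpr dP1t))
  have hXbt : Xbᵀ = Xb := by
    rw [← conjTranspose_eq_transpose_of_trivial]; exact hXbPD.1
  have dXb : IsUnit Xb.det := (Matrix.isUnit_iff_isUnit_det _).mp hXbPD.isUnit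
  refine ⟨Xb, hXbPD, ?_, ?_⟩
  · -- the estimation Lyapunov LMI
    set Ab : Matrix (Fin n ⊕ Fin n) (Fin n ⊕ Fin n) ℝ := fromBlocks A 0 (Bhat * C) Ahat
      with hAbdef
    set Bb : Matrix (Fin n ⊕ Fin n) ((Fin d ⊕ Fin m) ⊕ Fin p) ℝ :=
      fromBlocks (fromCols D B) 0 0 Bhat with hBbdef
    set Wb : Matrix ((Fin d ⊕ Fin m) ⊕ Fin p) ((Fin d ⊕ Fin m) ⊕ Fin p) ℝ :=
      fromBlocks (fromBlocks W 0 0 Gw⁻¹) 0 0 V with hWbdef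
    set Wi : Matrix ((Fin d ⊕ Fin m) ⊕ Fin p) ((Fin d ⊕ Fin m) ⊕ Fin p) ℝ :=
      fromBlocks (fromBlocks W⁻¹ 0 0 Gw) 0 0 V⁻¹ with hWidef
    set NA : Matrix (Fin n ⊕ Fin n) (Fin n ⊕ Fin n) ℝ := Ab * Xb with hNAdef
    set N : Matrix (Fin n ⊕ Fin n) (Fin n ⊕ Fin n) ℝ :=
      fromBlocks (A * Xhat) A Qhat (Yhat * A + Fhat * C) with hNdef
    set M12 : Matrix ((Fin n ⊕ Fin n) ⊕ (Fin n ⊕ Fin n)) ((Fin d ⊕ Fin m) ⊕ Fin p) ℝ :=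
      fromBlocks (fromBlocks D B (Yhat * D) (Yhat * B)) (fromRows 0 Fhat) 0 0 with hM12def
    -- scalar-level identities from the estimator reconstruction
    have hSB : Shat * Bhat = Fhat := by
      rw [hBhat, Matrix.mul_nonsing_inv_cancel_left _ _ dS]
    have hSAU : Shat * Ahat * Uhat = Qhat - Yhat * A * Xhat - Fhat * C * Xhat := by
      rw [hAhat, ← Matrix.mul_assoc Shat _ Uhat⁻¹,
        Matrix.mul_nonsing_inv_cancel_left _ _ dS,
        Matrix.nonsing_inv_mul_cancel_right _ _ dU]
    have hAbP2m : Ab * P2m =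
        fromBlocks (A * Xhat) A (Bhat * C * Xhat + Ahat * Uhat) (Bhat * C) := by
      rw [hAbdef, hP2mdef, fromBlocks_multiply]
      simp only [Matrix.mul_one, Matrix.mul_zero, Matrix.zero_mul, add_zero, zero_add]
    have hI1 : P1ᵀ * Xb * P1 = Pb := by
      rw [Matrix.mul_assoc, hXbP1, hPbeq]
    have hI2 : P1ᵀ * NA * P1 = N := by
      rw [hNAdef, Matrix.mul_assoc (P1ᵀ) (Ab * Xb) P1, Matrix.mul_assoc Ab Xb P1, hXbP1,
        hAbP2m, hP1t, hNdef, fromBlocks_multiply]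
      simp only [Matrix.one_mul, Matrix.zero_mul, Matrix.mul_zero, add_zero, zero_add]
      have e21 : Yhat * (A * Xhat) + Shat * (Bhat * C * Xhat + Ahat * Uhat) = Qhat := by
        rw [Matrix.mul_add, ← Matrix.mul_assoc Shat Ahat Uhat, hSAU,
          Matrix.mul_assoc Bhat C Xhat, ← Matrix.mul_assoc Shat Bhat (C * Xhat), hSB,
          ← Matrix.mul_assoc Fhat C Xhat, ← Matrix.mul_assoc Yhat A Xhat]
        abel
      have e22 : Yhat * A + Shat * (Bhat * C) = Yhat * A + Fhat * C := by
        rw [← Matrix.mul_assoc, hSB]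
      rw [e21, e22]
    have hI3 : P1ᵀ * NAᵀ * P1 = Nᵀ := by
      rw [← hI2]
      simp only [Matrix.transpose_mul, transpose_transpose, Matrix.mul_assoc]
    have hP1tBb : P1ᵀ * Bb = fromBlocks (fromCols D B) 0
        (fromCols (Yhat * D) (Yhat * B)) Fhat := by
      rw [hP1t, hBbdef, fromBlocks_multiply]
      simp only [Matrix.one_mul, Matrix.mul_zero, Matrix.zero_mul, add_zero, zero_add,
        mul_fromCols, hSB]
    have hreshape : fromRows (fromBlocks (fromCols D B) 0
        (fromCols (Yhat * D) (Yhat * B)) Fhat) 0 = M12 := by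
      rw [hM12def]
      ext i j
      rcases i with (i | i) | (i | i) <;> rcases j with (j | j) | j <;>
        simp
    -- the noise weight and its inverse
    have dW : IsUnit W.det := (Matrix.isUnit_iff_isUnit_det _).mp hW.isUnit
    have dGw : IsUnit Gw.det := (Matrix.isUnit_iff_isUnit_det _).mp hGw.isUnit
    have dV : IsUnit V.det := (Matrix.isUnit_iff_isUnit_det _).mp hV.isUnit
    have hWiWb : Wi * Wb = 1 := by
      rw [hWidef, hWbdef, fromBlocks_multiply, fromBlocks_multiply]
      simp only [Matrix.mul_zero, Matrix.zero_mul, add_zero, zero_add,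
        Matrix.nonsing_inv_mul _ dW, Matrix.mul_nonsing_inv _ dGw,
        Matrix.nonsing_inv_mul _ dV, fromBlocks_one]
    have hWbinv : Wi⁻¹ = Wb := Matrix.inv_eq_right_inv hWiWb
    have hWiPD : Wi.PosDef := by
      rw [hWidef]
      exact myPosDef_blockDiag (myPosDef_blockDiag hW.inv hGw) hV.inv
    -- the congruence transformation
    set T2 : Matrix ((Fin n ⊕ Fin n) ⊕ (Fin n ⊕ Fin n)) ((Fin n ⊕ Fin n) ⊕ (Fin n ⊕ Fin n)) ℝ :=
      fromBlocks P1 0 0 P1 with hT2def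
    set T : Matrix (((Fin n ⊕ Fin n) ⊕ (Fin n ⊕ Fin n)) ⊕ ((Fin d ⊕ Fin m) ⊕ Fin p))
        (((Fin n ⊕ Fin n) ⊕ (Fin n ⊕ Fin n)) ⊕ ((Fin d ⊕ Fin m) ⊕ Fin p)) ℝ :=
      fromBlocks T2 0 0 1 with hTdef
    set K11 : Matrix ((Fin n ⊕ Fin n) ⊕ (Fin n ⊕ Fin n)) ((Fin n ⊕ Fin n) ⊕ (Fin n ⊕ Fin n)) ℝ :=
      fromBlocks Xb NA NAᵀ Xb with hK11def
    set K12 : Matrix ((Fin n ⊕ Fin n) ⊕ (Fin n ⊕ Fin n)) ((Fin d ⊕ Fin m) ⊕ Fin p) ℝ :=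
      fromRows Bb 0 with hK12def
    have hT2t : T2ᵀ = fromBlocks P1ᵀ 0 0 P1ᵀ := by
      rw [hT2def, fromBlocks_transpose]
      simp only [transpose_zero]
    have e1 : T2ᵀ * K11 * T2 = fromBlocks Pb N Nᵀ Pb := by
      rw [hT2t, hT2def, hK11def, fromBlocks_multiply, fromBlocks_multiply]
      simp only [Matrix.zero_mul, Matrix.mul_zero, add_zero, zero_add]
      rw [hI1, hI2, hI3]
    have e2 : T2ᵀ * K12 = M12 := by
      rw [hT2t, hK12def, fromBlocks_mul_fromRows]
      simp only [Matrix.zero_mul, Matrix.mul_zero, add_zero, zero_add]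
      rw [hP1tBb, hreshape]
    have e3 : K12ᵀ * T2 = M12ᵀ := by
      rw [← e2, Matrix.transpose_mul, transpose_transpose]
    have hTt : Tᵀ = fromBlocks T2ᵀ 0 0 1 := by
      rw [hTdef, fromBlocks_transpose, transpose_one]
      simp only [transpose_zero]
    have hTKT : Tᵀ * (fromBlocks K11 K12 K12ᵀ Wi) * T
        = fromBlocks (fromBlocks Pb N Nᵀ Pb) M12 M12ᵀ Wi := by
      rw [hTt, hTdef, fromBlocks_multiply, fromBlocks_multiply]
      simp only [Matrix.zero_mul, Matrix.mul_zero, add_zero, zero_add,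
        Matrix.one_mul, Matrix.mul_one]
      rw [e1, e2, e3]
    have dT2 : IsUnit T2.det := by
      rw [hT2def, Matrix.det_fromBlocks_zero₂₁]
      exact dP1.mul dP1
    have dT : IsUnit T.det := by
      rw [hTdef, Matrix.det_fromBlocks_zero₂₁, Matrix.det_one, mul_one]
      exact dT2
    have dTt : IsUnit (Tᵀ).det := by rwa [Matrix.det_transpose]
    have hKPD : (fromBlocks K11 K12 K12ᵀ Wi).PosDef := by
      have h0 := myPosDef_conj hLMI1 (Matrix.isUnit_nonsing_inv_iff.mpr
        ((Matrix.isUnit_iff_isUnit_det _).mpr dTt))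
      have heq : (Tᵀ)⁻¹ * (fromBlocks (fromBlocks Pb N Nᵀ Pb) M12 M12ᵀ Wi) * ((Tᵀ)⁻¹)ᵀ
          = fromBlocks K11 K12 K12ᵀ Wi := by
        rw [Matrix.transpose_nonsing_inv, transpose_transpose, ← hTKT,
          ← Matrix.mul_assoc ((Tᵀ)⁻¹) _ T,
          Matrix.nonsing_inv_mul_cancel_left _ _ dTt,
          Matrix.mul_nonsing_inv_cancel_right _ _ dT]
      rwa [heq] at h0
    have hS1 := myPosDef_schur₂₂ K12 hWiPD hKPD
    have hK12W : K12 * Wb * K12ᵀ = fromBlocks (Bb * Wb * Bbᵀ) 0 0 0 := by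
      rw [hK12def, fromRows_mul, Matrix.zero_mul, transpose_fromRows, transpose_zero,
        fromRows_mul_fromCols]
      simp only [Matrix.mul_zero, Matrix.zero_mul]
    have hsub : K11 - fromBlocks (Bb * Wb * Bbᵀ) 0 0 0
        = fromBlocks (Xb - Bb * Wb * Bbᵀ) NA NAᵀ Xb := by
      rw [hK11def, sub_eq_add_neg, fromBlocks_neg, fromBlocks_add]
      simp only [neg_zero, add_zero, ← sub_eq_add_neg]
    rw [hWbinv, hK12W, hsub] at hS1
    have hS2 := myPosDef_schur₂₂ NA hXbPD hS1
    have hNAX : NA * Xb⁻¹ * NAᵀ = Ab * Xb * Abᵀ := by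
      rw [hNAdef, Matrix.transpose_mul, hXbt,
        Matrix.mul_nonsing_inv_cancel_right _ _ dXb, ← Matrix.mul_assoc]
    rw [hNAX, sub_right_comm] at hS2
    exact hS2
  · -- error covariance bound
    set Gm : Matrix (Fin n) (Fin n ⊕ Fin n) ℝ := fromCols (Xhat - Uhat) 1 with hGmdef
    set Cb : Matrix (Fin n) (Fin n ⊕ Fin n) ℝ := fromCols 1 (-1) with hCbdef
    have hL2 : (fromBlocks Ebar Gm Gmᵀ Pb).PosDef := by
      have ht : Gmᵀ = fromRows (Xhat - Uhat)ᵀ 1 := by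
        rw [hGmdef, transpose_fromCols, transpose_one]
      rwa [ht]
    have hSchur2 := myPosDef_schur₂₂ Gm hPb hL2
    have dP2m : IsUnit P2m.det := by
      have h1 : IsUnit ((P1ᵀ).det * P2m.det) := by
        rw [← Matrix.det_mul, hPbeq]; exact dPb
      exact isUnit_of_mul_isUnit_right h1
    have hCbP2m : Cb * P2m = Gm := by
      rw [hCbdef, hP2mdef, hGmdef, fromCols_mul_fromBlocks]
      simp [sub_eq_add_neg]
    have hCb : Cb = Gm * P2m⁻¹ := by
      rw [← hCbP2m, Matrix.mul_nonsing_inv_cancel_right _ _ dP2m]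
    have hP2mtP1 : P2mᵀ * P1 = Pb := by
      have : P2mᵀ * P1 = (P1ᵀ * P2m)ᵀ := by
        rw [Matrix.transpose_mul, transpose_transpose]
      rw [this, hPbeq, hPbt]
    have hPbinv : P1⁻¹ * (P2mᵀ)⁻¹ = Pb⁻¹ := by
      rw [← Matrix.mul_inv_rev, hP2mtP1]
    have hCXC : Cb * Xb * Cbᵀ = Gm * Pb⁻¹ * Gmᵀ := by
      have ht : Cbᵀ = (P2mᵀ)⁻¹ * Gmᵀ := by
        rw [hCb, Matrix.transpose_mul, Matrix.transpose_nonsing_inv]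
      rw [hXbdef, ht, ← hPbinv, ← hCbP2m]
      simp only [Matrix.mul_assoc]
    rwa [hCXC]
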